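/- If W is a rich palindrome and U is the shortest factor of W that is not a factor of the word V obtained by deleting the first and last letters of W, then U is a palindrome and is both a prefix and a suffix of W. -/

import Mathlib

open List

variable {α : Type*} [DecidableEq α]

/-- The set of factors (contiguous subwords) of `W`. -/
def factorFinset (W : List α) : Finset (List α) := (W.inits.flatMap List.tails).toFinset

/-- A palindrome is a word equal to its reversal. -/
def Pal (u : List α) : Prop := u.reverse = u

instance : DecidablePred (Pal : List α → Prop) :=
  fun u => inferInstanceAs (Decidable (u.reverse = u))

/-- The set of palindromic factors of `W` (including the empty word). -/
def palFactorFinset (W : List α) : Finset (List α) := (factorFinset W).filter Pal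

/-- Subword complexity: the number of distinct factors of `W` of length `n`. -/
def C (W : List α) (n : ℕ) : ℕ := ((factorFinset W).filter (fun u => u.length = n)).card

/-- Palindromic complexity: number of distinct palindromic factors of `W` of length `n`. -/
def P (W : List α) (n : ℕ) : ℕ := ((palFactorFinset W).filter (fun u => u.length = n)).card

/-- A word is rich if it has exactly `|W| + 1` distinct palindromic factors. -/
def Rich (W : List α) : Prop := (palFactorFinset W).card = W.length + 1

/-- Number of occurrences of `u` as a factor of `W`. -/
def occ (u W : List α) : ℕ := ((List.range (W.length + 1)).filter (fun i => u <+: W.drop i)).length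

/-- `Z` is a complete return to `u` in `W`: a factor of `W` with exactly two
occurrences of `u`, one as a prefix and one as a suffix. -/
def CompleteReturn (u Z W : List α) : Prop := Z <:+: W ∧ u <+: Z ∧ u <:+ Z ∧ occ u Z = 2

/-- `u` is a right special factor of `W`. -/
def RightSpecial (u W : List α) : Prop :=
  ∃ x y : α, x ≠ y ∧ (u ++ [x]) <:+: W ∧ (u ++ [y]) <:+: W

/-- `R_W`: the smallest `p` such that `W` has no right special factor of length `p`. -/
noncomputable def RW (W : List α) : ℕ := sInf {p : ℕ | ∀ u : List α, u.length = p → ¬ RightSpecial u W}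

/-- `K_W`: the length of the shortest suffix of `W` occurring exactly once in `W`. -/
noncomputable def KW (W : List α) : ℕ := sInf {k : ℕ | ∃ u : List α, u <:+ W ∧ u.length = k ∧ occ u W = 1}

/-- A word is trapezoidal if `|W| = R_W + K_W`. -/
def Trapezoidal (W : List α) : Prop := W.length = RW W + KW W

/-- The minimal period of `W`. -/
noncomputable def minPeriod (W : List α) : ℕ :=
  sInf {q : ℕ | 0 < q ∧ ∀ i : ℕ, i + q < W.length → W[i]? = W[i + q]?}

/-- A binary word is balanced if the number of occurrences of a letter in two
factors of equal length differ by at most 1. -/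
def BalancedWord (W : List Bool) : Prop :=
  ∀ u v : List Bool, u <:+: W → v <:+: W → u.length = v.length →
    u.count true ≤ v.count true + 1

namespace Stmt10Aux

lemma mem_factorFinset {u W : List α} : u ∈ factorFinset W ↔ u <:+: W := by
  simp only [factorFinset, List.mem_toFinset, List.mem_flatMap, List.mem_inits, List.mem_tails]
  constructor
  · rintro ⟨p, hp, hu⟩; exact hu.isInfix.trans hp.isInfix
  · rintro ⟨s, t, rfl⟩; exact ⟨s ++ u, ⟨t, by simp⟩, suffix_append s u⟩

lemma mem_palFactorFinset {u W : List α} :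
    u ∈ palFactorFinset W ↔ u <:+: W ∧ Pal u := by
  simp [palFactorFinset, Finset.mem_filter, mem_factorFinset]

lemma infix_prefix_or_tail {u X : List α} (h : u <:+: X) :
    u <+: X ∨ u <:+: X.tail := by
  obtain ⟨s, t, rfl⟩ := h
  cases s with
  | nil => left; exact ⟨t, by simp⟩
  | cons a s' => right; exact ⟨s', t, by simp⟩

lemma infix_suffix_or_dropLast {u X : List α} (h : u <:+: X) :
    u <:+ X ∨ u <:+: X.dropLast := by
  obtain ⟨s, t, rfl⟩ := h
  rcases eq_or_ne t [] with rfl | ht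
  · left; exact ⟨s, by simp⟩
  · right
    rw [show s ++ u ++ t = (s ++ u) ++ t by simp, dropLast_append_of_ne_nil ht]
    exact ⟨s, t.dropLast, by simp⟩

lemma tail_dropLast_comm (W : List α) : W.tail.dropLast = W.dropLast.tail := by
  rw [dropLast_eq_take, dropLast_eq_take, ← drop_one, ← drop_one, drop_take]
  congr 1
  simp

lemma pal_center {W : List α} (hpal : Pal W) : Pal (W.tail.dropLast) := by
  have h1 : ∀ l : List α, l.dropLast.reverse = l.reverse.tail :=
    fun l => (tail_reverse (l := l)).symm
  have h2 : W.tail.reverse = W.dropLast := by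
    have h3 := tail_reverse (l := W.reverse)
    rw [reverse_reverse, hpal] at h3
    rw [h3, reverse_reverse]
  show (W.tail.dropLast).reverse = _
  rw [h1, h2, ← tail_dropLast_comm]

/-- Injectivity bound: a word of length `n` has at most `n+1` palindromic factors. -/
lemma card_palFactor_le (X : List α) : (palFactorFinset X).card ≤ X.length + 1 := by
  classical
  have key : ∀ u v : List α, Pal u → Pal v →
      (∀ e' < sInf {e | u <:+ X.take e}, ¬ u <:+ X.take e') →
      sInf {e | u <:+ X.take e} ≤ X.length →
      v <:+ X.take (sInf {e | u <:+ X.take e}) →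
      u <:+ X.take (sInf {e | u <:+ X.take e}) → u <:+ v → u = v := by
    intro u v hu hv hminu hle hvt _ huv
    by_contra hne
    set e := sInf {e | u <:+ X.take e} with he
    have hlen : u.length < v.length := by
      rcases lt_or_eq_of_le huv.length_le with h | h
      · exact h
      · exact absurd (huv.eq_of_length h) hne
    have hupv : u <+: v := by
      have : u.reverse <:+ v.reverse := by rw [hu, hv]; exact huv
      exact reverse_suffix.mp this
    obtain ⟨c, hc⟩ := hupv
    obtain ⟨a, ha⟩ := hvt
    have hetake : (X.take e).length = e := by simp [hle]
    have hea : e = a.length + v.length := by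
      rw [← hetake, ← ha]; simp
    have hctake : u <:+ X.take (a.length + u.length) := by
      have h1 : X.take (a.length + u.length) = a ++ u := by
        have : X.take (a.length + u.length) = (X.take e).take (a.length + u.length) := by
          rw [take_take]
          congr 1
          omega
        rw [this, ← ha, ← hc, show a ++ (u ++ c) = (a ++ u) ++ c by simp,
          show a.length + u.length = (a ++ u).length by simp, take_left]
      rw [h1]; exact suffix_append a u
    have hlt : a.length + u.length < e := by omega
    exact hminu _ hlt hctake
  have hinj : (palFactorFinset X).card ≤ (Finset.range (X.length + 1)).card := by
    apply Finset.card_le_card_of_injOn (fun u => sInf {e | u <:+ X.take e})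
    · intro u hu
      rw [Finset.mem_coe, mem_palFactorFinset] at hu
      obtain ⟨⟨s, t, rfl⟩, _⟩ := hu
      have hmem : s.length + u.length ∈ {e | u <:+ (s ++ u ++ t).take e} := by
        show u <:+ _
        rw [show s ++ u ++ t = (s ++ u) ++ t by simp,
          show s.length + u.length = (s ++ u).length by simp, take_left]
        exact suffix_append s u
      have h1 : sInf {e | u <:+ (s ++ u ++ t).take e} ≤ s.length + u.length :=
        Nat.sInf_le hmem
      have hl : s.length + u.length ≤ (s ++ u ++ t).length := by simp
      simp only [Finset.mem_coe, Finset.mem_range]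
      omega
    · intro u hu v hv hfe0
      have hfe : sInf {e | u <:+ X.take e} = sInf {e | v <:+ X.take e} := hfe0
      rw [Finset.mem_coe, mem_palFactorFinset] at hu hv
      obtain ⟨huX, hup⟩ := hu
      obtain ⟨hvX, hvp⟩ := hv
      have hne : ∀ w : List α, w <:+: X → {e | w <:+ X.take e}.Nonempty ∧
          sInf {e | w <:+ X.take e} ≤ X.length := by
        rintro w ⟨s, t, rfl⟩
        have hmem : s.length + w.length ∈ {e | w <:+ (s ++ w ++ t).take e} := by
          show w <:+ _
          rw [show s ++ w ++ t = (s ++ w) ++ t by simp,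
            show s.length + w.length = (s ++ w).length by simp, take_left]
          exact suffix_append s w
        refine ⟨⟨_, hmem⟩, le_trans (Nat.sInf_le hmem) (by simp)⟩
      obtain ⟨hune, hule⟩ := hne u huX
      obtain ⟨hvne, hvle⟩ := hne v hvX
      have hut : u <:+ X.take (sInf {e | u <:+ X.take e}) := Nat.sInf_mem hune
      have hvt : v <:+ X.take (sInf {e | v <:+ X.take e}) := Nat.sInf_mem hvne
      rw [← hfe] at hvt
      have hminu : ∀ e' < sInf {e | u <:+ X.take e}, ¬ u <:+ X.take e' :=
        fun e' h => Nat.notMem_of_lt_sInf h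
      have hminv : ∀ e' < sInf {e | v <:+ X.take e}, ¬ v <:+ X.take e' :=
        fun e' h => Nat.notMem_of_lt_sInf h
      rcases suffix_or_suffix_of_suffix hut hvt with h | h
      · exact key u v hup hvp hminu hule hvt hut h
      · rw [hfe] at hut
        exact (key v u hvp hup hminv hvle hut (Nat.sInf_mem hvne) h).symm
  simpa using hinj

lemma step0 {u W : List α} (hu : u <:+: W) (hnu : ¬ u <:+: W.tail.dropLast) :
    u <+: W ∨ u <:+ W := by
  rcases infix_suffix_or_dropLast hu with h | h
  · right; exact h
  · rcases infix_prefix_or_tail h with h2 | h2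
    · left; exact h2.trans (dropLast_prefix W)
    · exact absurd (by rwa [← tail_dropLast_comm] at h2) hnu

lemma core {W U : List α} (h2 : 2 ≤ W.length) (hpal : Pal W) (hrich : Rich W)
    (hnV : ¬ U <:+: W.tail.dropLast)
    (hmin : ∀ u : List α, u <:+: W → ¬ u <:+: W.tail.dropLast → U.length ≤ u.length)
    (hsuf : U <:+ W) : Pal U := by
  by_contra hnp
  -- Claim A: every palindromic factor of W other than W itself is a factor of V
  have claimA : ∀ P : List α, P <:+: W → Pal P → P ≠ W → P <:+: W.tail.dropLast := by
    intro P hPW hPpal hPne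
    by_contra hPV
    have hPsuf : P <:+ W := by
      rcases step0 hPW hPV with h | h
      · have h' : P.reverse <:+ W.reverse := reverse_suffix.mpr h
        rwa [hPpal, hpal] at h'
      · exact h
    have hPpre : P <+: W := by
      have h' : P.reverse <+: W.reverse := reverse_prefix.mpr hPsuf
      rwa [hPpal, hpal] at h'
    have hlt : P.length < W.length :=
      lt_of_le_of_ne hPsuf.length_le (fun h => hPne (hPsuf.eq_of_length h))
    have hmle : U.length ≤ P.length := hmin P hPW hPV
    have hUP : U <:+ P := by
      rcases suffix_or_suffix_of_suffix hsuf hPsuf with h | h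
      · exact h
      · have : P = U := h.eq_of_length (le_antisymm h.length_le hmle)
        rw [this]
    have hPd : P <+: W.dropLast := by
      obtain ⟨r, hr⟩ := hPpre
      have hrne : r ≠ [] := by
        intro h
        rw [h, append_nil] at hr
        rw [hr] at hlt
        exact lt_irrefl _ hlt
      rw [← hr, dropLast_append_of_ne_nil hrne]
      exact ⟨r.dropLast, rfl⟩
    have hUd : U <:+: W.dropLast := hUP.isInfix.trans hPd.isInfix
    rcases infix_prefix_or_tail hUd with h | h
    · have hUpre : U <+: W := h.trans (dropLast_prefix W)
      have hUr : U.reverse <:+ W := by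
        have h' := reverse_suffix.mpr hUpre
        rwa [hpal] at h'
      have : U.reverse = U := by
        rcases suffix_or_suffix_of_suffix hUr hsuf with hh | hh
        · exact hh.eq_of_length (by simp)
        · exact (hh.eq_of_length (by simp)).symm
      exact hnp this
    · rw [← tail_dropLast_comm] at h
      exact hnV h
  -- counting contradiction
  have hsub : palFactorFinset W ⊆ insert W (palFactorFinset (W.tail.dropLast)) := by
    intro u hu
    rw [mem_palFactorFinset] at hu
    rcases eq_or_ne u W with rfl | hne
    · exact Finset.mem_insert_self _ _
    · exact Finset.mem_insert_of_mem
        (mem_palFactorFinset.mpr ⟨claimA u hu.1 hu.2 hne, hu.2⟩)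
  have hc1 := Finset.card_le_card hsub
  have hc2 := Finset.card_insert_le W (palFactorFinset (W.tail.dropLast))
  have hc3 := card_palFactor_le (W.tail.dropLast)
  have hlV : (W.tail.dropLast).length = W.length - 2 := by
    rw [length_dropLast, length_tail]
    omega
  rw [hrich] at hc1
  omega

end Stmt10Aux

theorem stmt10 {α : Type*} [DecidableEq α] (W U : List α) (h2 : 2 ≤ W.length)
    (hpal : Pal W) (hrich : Rich W)
    (hU : U <:+: W) (hnV : ¬ U <:+: W.tail.dropLast)
    (hmin : ∀ u : List α, u <:+: W → ¬ u <:+: W.tail.dropLast → U.length ≤ u.length) :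
    Pal U ∧ U <+: W ∧ U <:+ W := by
  have hVpal : Pal (W.tail.dropLast) := Stmt10Aux.pal_center hpal
  rcases Stmt10Aux.step0 hU hnV with hpre | hsuf
  · have hsufrev : U.reverse <:+ W := by
      have h' := reverse_suffix.mpr hpre
      rwa [hpal] at h'
    have hnV' : ¬ U.reverse <:+: W.tail.dropLast := by
      intro h
      rw [← hVpal] at h
      exact hnV (reverse_infix.mp h)
    have hpal' : Pal U.reverse :=
      Stmt10Aux.core h2 hpal hrich hnV'
        (fun u h1 h2' => by rw [length_reverse]; exact hmin u h1 h2') hsufrev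
    have hpalU : Pal U := by
      have : U.reverse.reverse = U.reverse := hpal'
      rw [reverse_reverse] at this
      exact this.symm
    exact ⟨hpalU, hpre, by rwa [hpalU] at hsufrev⟩
  · have hpalU : Pal U := Stmt10Aux.core h2 hpal hrich hnV hmin hsuf
    have hprerev : U.reverse <+: W := by
      have h' := reverse_prefix.mpr hsuf
      rwa [hpal] at h'
    exact ⟨hpalU, by rwa [hpalU] at hprerev, hsuf⟩
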